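/- Let F be a field, let n = ν·n_ℓ with ν ≥ 1 and n_ℓ ≥ 2, let γ ∈ F be a primitive n-th root of unity, and let integers r, d, a, p satisfy 1 ≤ p ≤ r ≤ d ≤ n_ℓ − 1 and 0 ≤ a ≤ ν − 1. For i ∈ {0, …, ν−1} let f_i(X) = X^{n_ℓ} − γ^{i·n_ℓ}. Let (M₀, M₁, …, M_{d−1}) be a tuple of polynomials in F[X], each of degree less than n, and for each i and each j ∈ {0,…,d−1} let m_{i,j} = M_j mod f_i. Suppose: (C1) for all i, j, the coefficient of X^t in m_{i,j} is zero for all t ≥ d; (C2) for all i and all t, j ∈ {0,…,d−1}, the coefficient of X^t in m_{i,j} equals the coefficient of X^j in m_{i,t}; (C3) for all i and all t, j with r ≤ t ≤ d−1 and r ≤ j ≤ d−1, the coefficient of X^t in m_{i,j} is zero; (C4) deg M_j ≤ a·n_ℓ + d − 1 for 0 ≤ j ≤ p−1, and deg M_j ≤ a·n_ℓ + p − 1 for p ≤ j ≤ d−1. If not all of M₀, …, M_{d−1} are zero, then the number of indices u ∈ {0, 1, …, n−1} such that M_j(γ^u) ≠ 0 for some j ∈ {0,…,d−1} is at least n − (a·n_ℓ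 + p) + 1. -/

import Mathlib

open Polynomial

lemma aux_card_le_natDegree {F : Type*} [Field F] {n : ℕ} {γ : F}
    (hγ : IsPrimitiveRoot γ n) {q : F[X]} (hq : q ≠ 0)
    (T : Finset ℕ) (hT : ∀ u ∈ T, u < n) (hz : ∀ u ∈ T, q.eval (γ ^ u) = 0) :
    T.card ≤ q.natDegree := by
  classical
  have hinj : Set.InjOn (fun u : ℕ => γ ^ u) ↑T := fun x hx y hy hxy =>
    hγ.pow_inj (hT x hx) (hT y hy) hxy
  calc T.card = (T.image (fun u : ℕ => γ ^ u)).card :=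
        (Finset.card_image_of_injOn hinj).symm
    _ ≤ q.roots.toFinset.card := by
        apply Finset.card_le_card
        intro x hx
        rw [Finset.mem_image] at hx
        obtain ⟨u, hu, rfl⟩ := hx
        rw [Multiset.mem_toFinset, mem_roots']
        exact ⟨hq, hz u hu⟩
    _ ≤ Multiset.card q.roots := q.roots.toFinset_card_le
    _ ≤ q.natDegree := q.card_roots'

theorem mbr_locality_min_distance
    (F : Type*) [Field F] (ν nℓ r d a p : ℕ)
    (hν : 1 ≤ ν) (hnℓ : 2 ≤ nℓ)
    (hp : 1 ≤ p) (hpr : p ≤ r) (hrd : r ≤ d) (hd : d ≤ nℓ - 1)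
    (ha : a ≤ ν - 1)
    (γ : F) (hγ : IsPrimitiveRoot γ (ν * nℓ))
    (M : Fin d → F[X]) (hMdeg : ∀ j : Fin d, (M j).degree < ((ν * nℓ : ℕ) : WithBot ℕ))
    (m : Fin ν → Fin d → F[X])
    (hm : ∀ (i : Fin ν) (j : Fin d),
      m i j = (M j) %ₘ (X ^ nℓ - Polynomial.C (γ ^ ((i : ℕ) * nℓ))))
    -- (C1)
    (hC1 : ∀ (i : Fin ν) (j : Fin d) (t : ℕ), d ≤ t → (m i j).coeff t = 0)
    -- (C2)
    (hC2 : ∀ (i : Fin ν) (t j : Fin d),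
      (m i j).coeff (t : ℕ) = (m i t).coeff (j : ℕ))
    -- (C3)
    (hC3 : ∀ (i : Fin ν) (j : Fin d) (t : ℕ),
      r ≤ t → t ≤ d - 1 → r ≤ (j : ℕ) → (m i j).coeff t = 0)
    -- (C4)
    (hC4a : ∀ j : Fin d, (j : ℕ) ≤ p - 1 →
      (M j).degree ≤ ((a * nℓ + d - 1 : ℕ) : WithBot ℕ))
    (hC4b : ∀ j : Fin d, p ≤ (j : ℕ) →
      (M j).degree ≤ ((a * nℓ + p - 1 : ℕ) : WithBot ℕ))
    (hnz : ∃ j : Fin d, M j ≠ 0) :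
    ν * nℓ - (a * nℓ + p) + 1
      ≤ {u : ℕ | u < ν * nℓ ∧ ∃ j : Fin d, (M j).eval (γ ^ u) ≠ 0}.ncard := by
  classical
  set n := ν * nℓ with hn
  have hν0 : 0 < ν := hν
  have hnℓ0 : 0 < nℓ := by omega
  have hdnℓ : d + 1 ≤ nℓ := by omega
  have hpd : p ≤ d := le_trans hpr hrd
  have hd1 : 1 ≤ d := le_trans hp hpd
  have haν : a + 1 ≤ ν := by omega
  have hxn : a * nℓ + nℓ ≤ n := by
    have h1 : (a + 1) * nℓ ≤ ν * nℓ := Nat.mul_le_mul_right _ haν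
    have h2 : (a + 1) * nℓ = a * nℓ + nℓ := by ring
    omega
  set f : Fin ν → F[X] := fun i => X ^ nℓ - C (γ ^ ((i : ℕ) * nℓ)) with hf
  have hfm : ∀ i, (f i).Monic := fun i => monic_X_pow_sub_C _ (by omega)
  have hmf : ∀ (i : Fin ν) (j : Fin d), m i j = M j %ₘ f i := by
    intro i j; simp only [hf]; exact hm i j
  have hfe : ∀ (u : ℕ) (i : Fin ν), u % ν = (i : ℕ) → (f i).eval (γ ^ u) = 0 := by
    intro u i hui
    obtain ⟨k, hk⟩ : ∃ k, u = ν * k + (i : ℕ) :=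
      ⟨u / ν, by rw [← hui]; exact (Nat.div_add_mod u ν).symm⟩
    have h1 : u * nℓ = ν * nℓ * k + (i : ℕ) * nℓ := by rw [hk]; ring
    have h2 : γ ^ (u * nℓ) = γ ^ ((i : ℕ) * nℓ) := by
      rw [h1, pow_add, pow_mul, hγ.pow_eq_one, one_pow, one_mul]
    simp only [hf, eval_sub, eval_pow, eval_X, eval_C, ← pow_mul, h2, sub_self]
  have hMeval : ∀ (u : ℕ) (i : Fin ν), u % ν = (i : ℕ) → ∀ j : Fin d,
      (M j).eval (γ ^ u) = (m i j).eval (γ ^ u) := by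
    intro u i hui j
    conv_lhs => rw [← modByMonic_add_div (M j) (f i)]
    rw [← hmf i j, eval_add, eval_mul, hfe u i hui, zero_mul, add_zero]
  set Z : Finset ℕ :=
    (Finset.range n).filter (fun u => ∀ j : Fin d, (M j).eval (γ ^ u) = 0) with hZ
  have hZmem : ∀ u ∈ Z, u < n ∧ ∀ j : Fin d, (M j).eval (γ ^ u) = 0 := by
    intro u hu
    rw [hZ, Finset.mem_filter, Finset.mem_range] at hu
    exact hu
  have hgoal : {u : ℕ | u < n ∧ ∃ j : Fin d, (M j).eval (γ ^ u) ≠ 0}.ncard = n - Z.card := by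
    have hset : {u : ℕ | u < n ∧ ∃ j : Fin d, (M j).eval (γ ^ u) ≠ 0}
        = ↑((Finset.range n).filter
            (fun u => ¬ ∀ j : Fin d, (M j).eval (γ ^ u) = 0)) := by
      ext u
      simp [not_forall]
    rw [hset, Set.ncard_coe_finset]
    have hsum : Z.card + ((Finset.range n).filter
        (fun u => ¬ ∀ j : Fin d, (M j).eval (γ ^ u) = 0)).card = n := by
      rw [hZ]
      have := Finset.card_filter_add_card_filter_not (s := Finset.range n)
        (p := fun u => ∀ j : Fin d, (M j).eval (γ ^ u) = 0)
      rw [Finset.card_range] at this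
      exact this
    have hZc : Z.card ≤ n := by
      rw [hZ]
      exact le_trans (Finset.card_filter_le _ _) (by rw [Finset.card_range])
    omega
  rw [hgoal]
  -- key step: if Z is too large then all M j vanish
  have key : a * nℓ + p ≤ Z.card → ∀ j : Fin d, M j = 0 := by
    intro hZbig
    -- Step A: columns j ≥ p vanish
    have hMp : ∀ j : Fin d, p ≤ (j : ℕ) → M j = 0 := by
      intro j hj
      by_contra hne
      have h1 := aux_card_le_natDegree hγ hne Z (fun u hu => (hZmem u hu).1)
        (fun u hu => (hZmem u hu).2 j)
      have h2 : (M j).natDegree ≤ a * nℓ + p - 1 :=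
        natDegree_le_iff_degree_le.mpr (hC4b j hj)
      omega
    have hmp : ∀ (i : Fin ν) (j : Fin d), p ≤ (j : ℕ) → m i j = 0 := by
      intro i j hj
      rw [hmf i j, hMp j hj, zero_modByMonic]
    -- Step B: all local coefficients from p on vanish
    have hcoef : ∀ (i : Fin ν) (j : Fin d) (t : ℕ), p ≤ t → (m i j).coeff t = 0 := by
      intro i j t ht
      by_cases htd : t < d
      · rw [show t = ((⟨t, htd⟩ : Fin d) : ℕ) from rfl, hC2 i ⟨t, htd⟩ j,
          hmp i ⟨t, htd⟩ ht, coeff_zero]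
      · exact hC1 i j t (by omega)
    have hmdeg : ∀ (i : Fin ν) (j : Fin d), m i j ≠ 0 → (m i j).natDegree < p := by
      intro i j h
      rw [natDegree_lt_iff_degree_lt h]
      exact (degree_lt_iff_coeff_zero _ _).mpr (fun t ht => hcoef i j t ht)
    have hmdegd : ∀ (i : Fin ν) (j : Fin d), (m i j).natDegree < d := by
      intro i j
      by_cases h : m i j = 0
      · rw [h, natDegree_zero]; omega
      · have := hmdeg i j h; omega
    -- groups
    set G : Fin ν → Finset ℕ :=
      fun i => (Finset.range n).filter (fun u => u % ν = (i : ℕ)) with hG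
    have hGmem : ∀ (i : Fin ν) (u : ℕ), u ∈ G i ↔ u < n ∧ u % ν = (i : ℕ) := by
      intro i u
      rw [hG]
      simp [Finset.mem_filter, Finset.mem_range]
    have hGcard : ∀ i, (G i).card = nℓ := by
      intro i
      have himg : G i = (Finset.range nℓ).image (fun k => ν * k + (i : ℕ)) := by
        ext u
        rw [hGmem, Finset.mem_image]
        constructor
        · rintro ⟨hu, hmod⟩
          refine ⟨u / ν, Finset.mem_range.mpr ?_, ?_⟩
          · rw [Nat.div_lt_iff_lt_mul hν0, mul_comm]; exact hu
          · rw [← hmod]; exact Nat.div_add_mod u ν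
        · rintro ⟨k, hk, rfl⟩
          rw [Finset.mem_range] at hk
          constructor
          · have h1 : ν * (k + 1) ≤ ν * nℓ := Nat.mul_le_mul_left _ (by omega)
            have h2 : ν * (k + 1) = ν * k + ν := by ring
            have h3 := i.isLt
            omega
          · rw [Nat.mul_add_mod]; exact Nat.mod_eq_of_lt i.isLt
      rw [himg, Finset.card_image_of_injective _ ?hinj, Finset.card_range]
      case hinj =>
        intro x y h
        simp only [] at h
        have h1 := Nat.add_right_cancel h
        exact Nat.eq_of_mul_eq_mul_left hν0 h1
    have hGdisj : ∀ i₁ i₂ : Fin ν, i₁ ≠ i₂ → Disjoint (G i₁) (G i₂) := by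
      intro i₁ i₂ hne
      rw [Finset.disjoint_left]
      intro u h1 h2
      rw [hGmem] at h1 h2
      exact hne (Fin.ext (h1.2.symm.trans h2.2))
    set Full : Finset (Fin ν) := Finset.univ.filter (fun i => ∀ j, m i j = 0) with hFull
    set T : Finset ℕ := Full.biUnion G with hT
    have hTcard : T.card = Full.card * nℓ := by
      rw [hT, Finset.card_biUnion (fun i₁ _ i₂ _ hne => hGdisj i₁ i₂ hne),
        Finset.sum_congr rfl (fun i _ => hGcard i), Finset.sum_const, smul_eq_mul]
    have hGZ : ∀ i : Fin ν, i ∈ Full → G i ⊆ Z := by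
      intro i hi u hu
      rw [hFull, Finset.mem_filter] at hi
      rw [hGmem] at hu
      rw [hZ, Finset.mem_filter, Finset.mem_range]
      exact ⟨hu.1, fun j => by rw [hMeval u i hu.2 j, hi.2 j, eval_zero]⟩
    have hTZ : T ⊆ Z := by
      intro u hu
      rw [hT, Finset.mem_biUnion] at hu
      obtain ⟨i, hi, hui⟩ := hu
      exact hGZ i hi hui
    have hMndeg : ∀ j : Fin d, (M j).natDegree ≤ a * nℓ + d - 1 := by
      intro j
      apply natDegree_le_iff_degree_le.mpr
      by_cases hjp : (j : ℕ) < p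
      · exact hC4a j (by omega)
      · refine le_trans (hC4b j (by omega)) ?_
        exact_mod_cast Nat.cast_le.mpr (by omega : a * nℓ + p - 1 ≤ a * nℓ + d - 1)
    by_cases hbig : a + 1 ≤ Full.card
    · -- enough fully-zero groups: every column has too many roots
      intro j
      by_contra hne
      have h1 := aux_card_le_natDegree hγ hne T (fun u hu => (hZmem u (hTZ hu)).1)
        (fun u hu => (hZmem u (hTZ hu)).2 j)
      have h2 : (a + 1) * nℓ ≤ Full.card * nℓ := Nat.mul_le_mul_right _ hbig
      have h3 : (a + 1) * nℓ = a * nℓ + nℓ := by ring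
      have h4 := hMndeg j
      omega
    · -- few full groups
      have hbsmall : Full.card ≤ a := by omega
      set W : Finset ℕ := Z \ T with hW
      have hWZ : W ⊆ Z := Finset.sdiff_subset
      have hWcard : p ≤ W.card := by
        have h1 : W.card = Z.card - T.card := Finset.card_sdiff_of_subset hTZ
        have h2 : Full.card * nℓ ≤ a * nℓ := Nat.mul_le_mul_right _ hbsmall
        omega
      have hNzero : ∀ u ∈ W, (∑ j : Fin d, C (γ ^ (u * (j : ℕ))) * M j) = 0 := by
        intro u hu
        obtain ⟨huZ, huT⟩ := Finset.mem_sdiff.mp hu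
        have hun : u < n := (hZmem u huZ).1
        set i : Fin ν := ⟨u % ν, Nat.mod_lt u hν0⟩ with hidef
        have hui : u % ν = (i : ℕ) := rfl
        have huG : u ∈ G i := (hGmem i u).mpr ⟨hun, hui⟩
        have hiF : i ∉ Full := fun hiF =>
          huT (by rw [hT]; exact Finset.mem_biUnion.mpr ⟨i, hiF, huG⟩)
        have hsi : (Z ∩ G i).card < p := by
          by_contra hgec
          push_neg at hgec
          apply hiF
          rw [hFull, Finset.mem_filter]
          refine ⟨Finset.mem_univ _, fun j => ?_⟩
          by_cases hjp : p ≤ (j : ℕ)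
          · exact hmp i j hjp
          · by_contra hne
            have h1 := aux_card_le_natDegree hγ hne (Z ∩ G i)
              (fun u' hu' => (hZmem u' (Finset.mem_inter.mp hu').1).1)
              (fun u' hu' => by
                obtain ⟨hu1, hu2⟩ := Finset.mem_inter.mp hu'
                rw [← hMeval u' i ((hGmem i u').mp hu2).2 j]
                exact (hZmem u' hu1).2 j)
            have h2 := hmdeg i j hne
            omega
        -- the γ^u-combination of the local polynomials vanishes
        have hL : (∑ j : Fin d, C (γ ^ (u * (j : ℕ))) * m i j) = 0 := by
          apply Polynomial.ext
          intro t
          rw [finset_sum_coeff]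
          simp only [coeff_C_mul, coeff_zero]
          by_cases htp : p ≤ t
          · exact Finset.sum_eq_zero (fun j _ => by rw [hcoef i j t htp, mul_zero])
          · push_neg at htp
            have htd : t < d := by omega
            calc ∑ j : Fin d, γ ^ (u * (j : ℕ)) * (m i j).coeff t
                = ∑ j : Fin d, (m i ⟨t, htd⟩).coeff (j : ℕ) * (γ ^ u) ^ (j : ℕ) := by
                  refine Finset.sum_congr rfl (fun j _ => ?_)
                  rw [show (m i j).coeff t = (m i ⟨t, htd⟩).coeff (j : ℕ) from
                    hC2 i ⟨t, htd⟩ j, pow_mul]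
                  ring
              _ = (m i ⟨t, htd⟩).eval (γ ^ u) := by
                  rw [eval_eq_sum_range' (hmdegd i ⟨t, htd⟩) (γ ^ u)]
                  exact Fin.sum_univ_eq_sum_range
                    (fun k => (m i ⟨t, htd⟩).coeff k * (γ ^ u) ^ k) d
              _ = (M ⟨t, htd⟩).eval (γ ^ u) := (hMeval u i hui ⟨t, htd⟩).symm
              _ = 0 := (hZmem u huZ).2 ⟨t, htd⟩
        have hdvd : f i ∣ ∑ j : Fin d, C (γ ^ (u * (j : ℕ))) * M j := by
          have hsplit : (∑ j : Fin d, C (γ ^ (u * (j : ℕ))) * M j)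
              = (∑ j : Fin d, C (γ ^ (u * (j : ℕ))) * m i j)
                + f i * (∑ j : Fin d, C (γ ^ (u * (j : ℕ))) * (M j /ₘ f i)) := by
            rw [Finset.mul_sum, ← Finset.sum_add_distrib]
            refine Finset.sum_congr rfl (fun j _ => ?_)
            conv_lhs => rw [← modByMonic_add_div (M j) (f i)]
            rw [← hmf i j]
            ring
          rw [hsplit, hL, zero_add]
          exact Dvd.intro _ rfl
        by_contra hNne
        set R : Finset ℕ := Z ∪ G i with hR
        have hRlt : ∀ u' ∈ R, u' < n := by
          intro u' hu'
          rcases Finset.mem_union.mp hu' with h | h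
          · exact (hZmem u' h).1
          · exact ((hGmem i u').mp h).1
        have hRz : ∀ u' ∈ R,
            (∑ j : Fin d, C (γ ^ (u * (j : ℕ))) * M j).eval (γ ^ u') = 0 := by
          intro u' hu'
          rcases Finset.mem_union.mp hu' with h | h
          · rw [eval_finset_sum]
            exact Finset.sum_eq_zero
              (fun j _ => by rw [eval_mul, (hZmem u' h).2 j, mul_zero])
          · obtain ⟨q, hq⟩ := hdvd
            rw [hq, eval_mul, hfe u' i ((hGmem i u').mp h).2, zero_mul]
        have h1 := aux_card_le_natDegree hγ hNne R hRlt hRz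
        have h2 : (∑ j : Fin d, C (γ ^ (u * (j : ℕ))) * M j).natDegree
            ≤ a * nℓ + d - 1 :=
          natDegree_sum_le_of_forall_le _ _
            (fun j _ => le_trans (natDegree_C_mul_le _ _) (hMndeg j))
        have h3 : R.card + (Z ∩ G i).card = Z.card + nℓ := by
          rw [hR, Finset.card_union_add_card_inter, hGcard]
        omega
      -- Vandermonde-style conclusion
      obtain ⟨W₀, hW₀sub, hW₀card⟩ := Finset.exists_subset_card_eq hWcard
      have hPM : ∀ (k : Fin p) (t : ℕ), (M (Fin.castLE hpd k)).coeff t = 0 := by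
        intro k t
        set P : F[X] :=
          ∑ j : Fin p, monomial (j : ℕ) ((M (Fin.castLE hpd j)).coeff t) with hP
        have hPz : ∀ u ∈ W₀, P.eval (γ ^ u) = 0 := by
          intro u hu
          have hN := hNzero u (hW₀sub hu)
          have hcoeffN := congrArg (fun q : F[X] => q.coeff t) hN
          simp only [coeff_zero] at hcoeffN
          rw [finset_sum_coeff] at hcoeffN
          simp only [coeff_C_mul] at hcoeffN
          set g : ℕ → F :=
            fun k' => if h : k' < d then γ ^ (u * k') * (M ⟨k', h⟩).coeff t else 0
            with hg
          have e1 : ∑ j : Fin d, γ ^ (u * (j : ℕ)) * (M j).coeff t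
              = ∑ k' ∈ Finset.range d, g k' := by
            rw [← Fin.sum_univ_eq_sum_range g d]
            refine Finset.sum_congr rfl (fun j _ => ?_)
            rw [hg]
            simp only [j.isLt, dif_pos, Fin.eta]
          have e2 : P.eval (γ ^ u) = ∑ k' ∈ Finset.range p, g k' := by
            rw [hP, eval_finset_sum, ← Fin.sum_univ_eq_sum_range g p]
            refine Finset.sum_congr rfl (fun j _ => ?_)
            rw [eval_monomial]
            simp only [hg]
            have hjd : (j : ℕ) < d := lt_of_lt_of_le j.isLt hpd
            rw [dif_pos hjd]
            have : (⟨(j : ℕ), hjd⟩ : Fin d) = Fin.castLE hpd j := rfl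
            rw [this, pow_mul]
            ring
          have e3 : ∑ k' ∈ Finset.range p, g k' = ∑ k' ∈ Finset.range d, g k' := by
            refine Finset.sum_subset (Finset.range_subset_range.mpr hpd) (fun k' _ hk' => ?_)
            rw [Finset.mem_range, not_lt] at hk'
            simp only [hg]
            by_cases h : k' < d
            · rw [dif_pos h, hMp ⟨k', h⟩ hk', coeff_zero, mul_zero]
            · rw [dif_neg h]
          rw [e2, e3, ← e1, hcoeffN]
        have hPzero : P = 0 := by
          by_contra hne
          have h1 := aux_card_le_natDegree hγ hne W₀
            (fun u hu => (hZmem u (hWZ (hW₀sub hu))).1) hPz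
          have h2 : P.natDegree ≤ p - 1 := by
            refine natDegree_sum_le_of_forall_le _ _ (fun j _ => ?_)
            exact le_trans (natDegree_monomial_le _) (by omega)
          omega
        have hcoeffP := congrArg (fun q : F[X] => q.coeff (k : ℕ)) hPzero
        simp only [coeff_zero] at hcoeffP
        rw [hP, finset_sum_coeff] at hcoeffP
        simp only [coeff_monomial] at hcoeffP
        rw [Finset.sum_eq_single k (fun j _ hjk =>
            if_neg (fun h => hjk (Fin.ext h)))
          (fun h => absurd (Finset.mem_univ k) h), if_pos rfl] at hcoeffP
        exact hcoeffP
      intro j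
      by_cases hjp : p ≤ (j : ℕ)
      · exact hMp j hjp
      · push_neg at hjp
        have hcast : Fin.castLE hpd ⟨(j : ℕ), hjp⟩ = j := Fin.ext rfl
        rw [← hcast]
        exact Polynomial.ext
          (fun t => (hPM ⟨(j : ℕ), hjp⟩ t).trans (coeff_zero t).symm)
  rcases Nat.lt_or_ge Z.card (a * nℓ + p) with hlt | hge
  · omega
  · obtain ⟨j₀, hj₀⟩ := hnz
    exact absurd (key hge j₀) hj₀
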